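/- For every ϱ ∈ [0,1], the Riccati equation has no blow-up: its maximal backward solution K_·(ϱ) exists on all of (−∞, T] (i.e. t_ϱ = −∞), and there is a constant C > 0 (depending only on T, β and the supremum norms of the coefficients H_{kl} on [0,T]) such that 0 ≤ K_t(ϱ) ≤ C·Iₙ for all t ∈ [0,T] and all ϱ ∈ [0,1]. -/

import Mathlib

open Filter Matrix Set
attribute [local instance] Matrix.normedAddCommGroup Matrix.normedSpace

variable {n : ℕ}

private lemma dot_mulVec_left (A : Matrix (Fin n) (Fin n) ℝ) (u v : Fin n → ℝ) :
    u ⬝ᵥ (A *ᵥ v) = (Aᵀ *ᵥ u) ⬝ᵥ v := by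
  rw [Matrix.dotProduct_mulVec, Matrix.mulVec_transpose]

private lemma htrans {A B : Matrix (Fin n) (Fin n) ℝ} (h : Aᵀ = B) (u v : Fin n → ℝ) :
    (A *ᵥ u) ⬝ᵥ v = (B *ᵥ v) ⬝ᵥ u := by
  rw [dotProduct_comm, dot_mulVec_left, h]

private lemma psd_form' {K : Matrix (Fin n) (Fin n) ℝ} (hK : K.PosSemidef) (x : Fin n → ℝ) :
    0 ≤ x ⬝ᵥ (K *ᵥ x) := by simpa using hK.dotProduct_mulVec_nonneg x

private lemma psd_symm {K : Matrix (Fin n) (Fin n) ℝ} (hK : K.PosSemidef) : Kᵀ = K := by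
  have h := hK.1
  rwa [Matrix.IsHermitian, Matrix.conjTranspose_eq_transpose_of_trivial] at h

private lemma dot_cs (u w : Fin n → ℝ) : (u ⬝ᵥ w) ^ 2 ≤ (u ⬝ᵥ u) * (w ⬝ᵥ w) := by
  have := Finset.sum_mul_sq_le_sq_mul_sq Finset.univ u w
  simpa [dotProduct, pow_two] using this

private lemma frob_rowCS (B : Matrix (Fin n) (Fin n) ℝ) (y : Fin n → ℝ) :
    (B *ᵥ y) ⬝ᵥ (B *ᵥ y) ≤ (∑ i, ∑ j, (B i j) ^ 2) * (y ⬝ᵥ y) := by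
  have h : ∀ i, ((B *ᵥ y) i) ^ 2 ≤ (∑ j, (B i j) ^ 2) * (y ⬝ᵥ y) := by
    intro i
    have := Finset.sum_mul_sq_le_sq_mul_sq Finset.univ (fun j => B i j) y
    simpa [Matrix.mulVec, dotProduct, pow_two] using this
  calc (B *ᵥ y) ⬝ᵥ (B *ᵥ y) = ∑ i, ((B *ᵥ y) i) ^ 2 := by
        simp [dotProduct, pow_two]
    _ ≤ ∑ i, (∑ j, (B i j) ^ 2) * (y ⬝ᵥ y) := Finset.sum_le_sum fun i _ => h i
    _ = (∑ i, ∑ j, (B i j) ^ 2) * (y ⬝ᵥ y) := by rw [Finset.sum_mul]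

private lemma BtB_form (B : Matrix (Fin n) (Fin n) ℝ) (x : Fin n → ℝ) :
    x ⬝ᵥ ((Bᵀ * B) *ᵥ x) = (B *ᵥ x) ⬝ᵥ (B *ᵥ x) := by
  rw [← Matrix.mulVec_mulVec, Matrix.dotProduct_mulVec, Matrix.vecMul_transpose]

private lemma psd_factor {K : Matrix (Fin n) (Fin n) ℝ} (hK : K.PosSemidef) :
    ∃ B : Matrix (Fin n) (Fin n) ℝ, K = Bᵀ * B ∧ Matrix.trace K = ∑ i, ∑ j, (B i j) ^ 2 := by
  obtain ⟨B, hB⟩ : ∃ B : Matrix (Fin n) (Fin n) ℝ, K = Bᴴ * B := by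
    open scoped MatrixOrder in
    exact CStarAlgebra.nonneg_iff_eq_star_mul_self.mp hK.nonneg
  rw [Matrix.conjTranspose_eq_transpose_of_trivial] at hB
  refine ⟨B, hB, ?_⟩
  subst hB
  have : ∀ i, (Bᵀ * B) i i = ∑ j, (B j i)^2 := by
    intro i; simp [Matrix.mul_apply, Matrix.transpose_apply, pow_two]
  rw [Matrix.trace]
  simp only [Matrix.diag]
  rw [Finset.sum_congr rfl fun i _ => this i]
  rw [Finset.sum_comm]

private lemma psd_form_le_trace {K : Matrix (Fin n) (Fin n) ℝ} (hK : K.PosSemidef)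
    (x : Fin n → ℝ) : x ⬝ᵥ (K *ᵥ x) ≤ Matrix.trace K * (x ⬝ᵥ x) := by
  obtain ⟨B, rfl, htr⟩ := psd_factor hK
  rw [htr, BtB_form]
  exact frob_rowCS B x

private lemma psd_mulVec_sq_le {K : Matrix (Fin n) (Fin n) ℝ} (hK : K.PosSemidef)
    (x : Fin n → ℝ) : (K *ᵥ x) ⬝ᵥ (K *ᵥ x) ≤ (Matrix.trace K)^2 * (x ⬝ᵥ x) := by
  obtain ⟨B, hB, htr⟩ := psd_factor hK
  have h1 : K *ᵥ x = Bᵀ *ᵥ (B *ᵥ x) := by rw [hB, ← Matrix.mulVec_mulVec]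
  have h2 : (Bᵀ *ᵥ (B *ᵥ x)) ⬝ᵥ (Bᵀ *ᵥ (B *ᵥ x))
      ≤ (∑ i, ∑ j, (Bᵀ i j) ^ 2) * ((B *ᵥ x) ⬝ᵥ (B *ᵥ x)) := frob_rowCS Bᵀ (B *ᵥ x)
  have h3 : (∑ i, ∑ j, (Bᵀ i j) ^ 2) = Matrix.trace K := by
    rw [htr]
    simp only [Matrix.transpose_apply]
    rw [Finset.sum_comm]
  have h4 : (B *ᵥ x) ⬝ᵥ (B *ᵥ x) ≤ Matrix.trace K * (x ⬝ᵥ x) := by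
    rw [← BtB_form, ← hB]; exact psd_form_le_trace hK x
  have htr0 : 0 ≤ Matrix.trace K := by rw [htr]; positivity
  calc (K *ᵥ x) ⬝ᵥ (K *ᵥ x) ≤ Matrix.trace K * ((B *ᵥ x) ⬝ᵥ (B *ᵥ x)) := by
        rw [h1, ← h3]; exact h2
    _ ≤ Matrix.trace K * (Matrix.trace K * (x ⬝ᵥ x)) := mul_le_mul_of_nonneg_left h4 htr0
    _ = (Matrix.trace K)^2 * (x ⬝ᵥ x) := by ring

private lemma psd_cs {K : Matrix (Fin n) (Fin n) ℝ} (hK : K.PosSemidef) (u v : Fin n → ℝ) :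
    (u ⬝ᵥ (K *ᵥ v)) ^ 2 ≤ (u ⬝ᵥ (K *ᵥ u)) * (v ⬝ᵥ (K *ᵥ v)) := by
  have hsymm : ∀ a b : Fin n → ℝ, a ⬝ᵥ (K *ᵥ b) = b ⬝ᵥ (K *ᵥ a) := by
    intro a b
    rw [dot_mulVec_left, psd_symm hK, dotProduct_comm]
  have h : ∀ t : ℝ, 0 ≤ (v ⬝ᵥ (K *ᵥ v)) * (t * t) + (2 * (u ⬝ᵥ (K *ᵥ v))) * t + u ⬝ᵥ (K *ᵥ u) := by
    intro t
    have h0 := psd_form' hK (u + t • v)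
    have e1 : (u + t • v) ⬝ᵥ (K *ᵥ (u + t • v))
        = u ⬝ᵥ (K *ᵥ u) + t * (u ⬝ᵥ (K *ᵥ v)) + t * (v ⬝ᵥ (K *ᵥ u)) + t * t * (v ⬝ᵥ (K *ᵥ v)) := by
      simp [Matrix.mulVec_add, Matrix.mulVec_smul, dotProduct_add, add_dotProduct,
        dotProduct_smul, smul_dotProduct, smul_eq_mul]
      ring
    rw [e1, hsymm v u] at h0
    linarith
  have hd := discrim_le_zero h
  rw [discrim] at hd
  nlinarith [hd]

private lemma entry_form (K : Matrix (Fin n) (Fin n) ℝ) (i j : Fin n) :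
    K i j = Pi.single i 1 ⬝ᵥ (K *ᵥ Pi.single j 1) := by
  simp [single_dotProduct, Matrix.mulVec_single]

private lemma psd_diag_nonneg {K : Matrix (Fin n) (Fin n) ℝ} (hK : K.PosSemidef) (i : Fin n) :
    0 ≤ K i i := by
  have := hK.dotProduct_mulVec_nonneg (Pi.single i 1)
  simpa [← entry_form] using this

private lemma psd_diag_le_trace {K : Matrix (Fin n) (Fin n) ℝ} (hK : K.PosSemidef) (i : Fin n) :
    K i i ≤ Matrix.trace K := by
  have : K i i ≤ ∑ j, K j j :=
    Finset.single_le_sum (fun j _ => psd_diag_nonneg hK j) (Finset.mem_univ i)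
  simpa [Matrix.trace, Matrix.diag] using this

private lemma psd_trace_nonneg {K : Matrix (Fin n) (Fin n) ℝ} (hK : K.PosSemidef) :
    0 ≤ Matrix.trace K := by
  have : (0:ℝ) ≤ ∑ j, K j j := Finset.sum_nonneg fun j _ => psd_diag_nonneg hK j
  simpa [Matrix.trace, Matrix.diag] using this

private lemma psd_norm_le_trace {K : Matrix (Fin n) (Fin n) ℝ} (hK : K.PosSemidef) :
    ‖K‖ ≤ Matrix.trace K := by
  rw [Matrix.norm_le_iff (psd_trace_nonneg hK)]
  intro i j
  have hcs := psd_cs hK (Pi.single i 1) (Pi.single j 1)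
  rw [← entry_form, ← entry_form, ← entry_form] at hcs
  have h1 : K i i * K j j ≤ Matrix.trace K * Matrix.trace K :=
    mul_le_mul (psd_diag_le_trace hK i) (psd_diag_le_trace hK j)
      (psd_diag_nonneg hK j) (psd_trace_nonneg hK)
  have h2 : (K i j)^2 ≤ (Matrix.trace K)^2 := by nlinarith
  have : ‖K i j‖ = |K i j| := rfl
  rw [this, abs_le]
  constructor <;> nlinarith [psd_trace_nonneg hK]

private lemma frob_le_norm (A : Matrix (Fin n) (Fin n) ℝ) :
    (∑ i, ∑ j, (A i j) ^ 2) ≤ (n:ℝ)^2 * ‖A‖^2 := by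
  have h : ∀ i j : Fin n, (A i j)^2 ≤ ‖A‖^2 := by
    intro i j
    have h1 : ‖A i j‖ ≤ ‖A‖ := Matrix.norm_entry_le_entrywise_sup_norm A
    have h2 : |A i j| ≤ ‖A‖ := h1
    nlinarith [abs_nonneg (A i j), le_abs_self (A i j), neg_abs_le (A i j)]
  calc (∑ i, ∑ j, (A i j) ^ 2) ≤ ∑ i : Fin n, ∑ j : Fin n, ‖A‖^2 :=
        Finset.sum_le_sum fun i _ => Finset.sum_le_sum fun j _ => h i j
    _ = (n:ℝ)^2 * ‖A‖^2 := by simp [pow_two]; ring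

private lemma mulVec_sq_le (A : Matrix (Fin n) (Fin n) ℝ) (y : Fin n → ℝ) :
    (A *ᵥ y) ⬝ᵥ (A *ᵥ y) ≤ (n:ℝ)^2 * ‖A‖^2 * (y ⬝ᵥ y) := by
  have h1 := frob_rowCS A y
  have h2 := frob_le_norm A
  have h3 : (0:ℝ) ≤ y ⬝ᵥ y := Finset.sum_nonneg fun i _ => mul_self_nonneg (y i)
  nlinarith

private lemma dot_self_nonneg (y : Fin n → ℝ) : (0:ℝ) ≤ y ⬝ᵥ y :=
  Finset.sum_nonneg fun i _ => mul_self_nonneg (y i)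

private lemma unit_det {β : ℝ} (hβ : 0 < β) {K H : Matrix (Fin n) (Fin n) ℝ}
    (hK : K.PosSemidef)
    (hH : ∀ z : Fin n → ℝ, (H *ᵥ z) ⬝ᵥ z ≤ -β * (z ⬝ᵥ z)) :
    IsUnit (1 - K * H).det := by
  by_contra hdet
  have h0 : (1 - K * H).det = 0 := by
    rcases eq_or_ne ((1 - K * H).det) 0 with h | h
    · exact h
    · exact absurd (isUnit_iff_ne_zero.mpr h) hdet
  obtain ⟨v, hv0, hv⟩ := (Matrix.exists_mulVec_eq_zero_iff).mpr h0
  have hveq : v = K *ᵥ (H *ᵥ v) := by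
    have : (1 - K * H) *ᵥ v = v - K *ᵥ (H *ᵥ v) := by
      rw [Matrix.sub_mulVec, Matrix.one_mulVec, ← Matrix.mulVec_mulVec]
    rw [this] at hv
    exact (sub_eq_zero.mp hv)
  have h1 : 0 ≤ (H *ᵥ v) ⬝ᵥ (K *ᵥ (H *ᵥ v)) := psd_form' hK _
  have h2 : (H *ᵥ v) ⬝ᵥ v ≤ -β * (v ⬝ᵥ v) := hH v
  have h3 : 0 < v ⬝ᵥ v := by
    rcases lt_or_eq_of_le (dot_self_nonneg v) with h | h
    · exact h
    · exact absurd (dotProduct_self_eq_zero.mp h.symm) hv0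
  have h4 : (H *ᵥ v) ⬝ᵥ v = (H *ᵥ v) ⬝ᵥ (K *ᵥ (H *ᵥ v)) :=
    congrArg (fun w => (H *ᵥ v) ⬝ᵥ w) hveq
  nlinarith

private lemma inv_cancel {β : ℝ} (hβ : 0 < β) {K H : Matrix (Fin n) (Fin n) ℝ}
    (hK : K.PosSemidef)
    (hH : ∀ z : Fin n → ℝ, (H *ᵥ z) ⬝ᵥ z ≤ -β * (z ⬝ᵥ z)) (y : Fin n → ℝ) :
    (1 - K * H) *ᵥ ((1 - K * H)⁻¹ *ᵥ y) = y := by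
  rw [Matrix.mulVec_mulVec, Matrix.mul_nonsing_inv _ (unit_det hβ hK hH), Matrix.one_mulVec]

private lemma amgm {β r s E : ℝ} (hβ : 0 < β) (hs : 0 ≤ s) (hE : 0 ≤ E) (hr : r^2 ≤ s*E) :
    2*β*r ≤ β^2*s + E := by
  have h1 : |r| ≤ Real.sqrt (s*E) := Real.abs_le_sqrt hr
  have h2 : Real.sqrt (s*E) = Real.sqrt s * Real.sqrt E := Real.sqrt_mul hs E
  have h3 : 0 ≤ β * Real.sqrt s - Real.sqrt E ∨ True := Or.inr trivial
  have h4 : (β * Real.sqrt s - Real.sqrt E)^2 ≥ 0 := sq_nonneg _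
  have h5 : Real.sqrt s ^ 2 = s := Real.sq_sqrt hs
  have h6 : Real.sqrt E ^ 2 = E := Real.sq_sqrt hE
  have h7 : 2*β*(Real.sqrt s * Real.sqrt E) ≤ β^2*s + E := by nlinarith
  have h8 : r ≤ |r| := le_abs_self r
  have h9 : 2*β*r ≤ 2*β*(Real.sqrt s * Real.sqrt E) := by
    rw [← h2]
    have := mul_le_mul_of_nonneg_left (h8.trans h1) (by positivity : (0:ℝ) ≤ 2*β)
    linarith
  linarith

private lemma amgm2 {β r s E u : ℝ} (hβ : 0 < β) (hs : 0 ≤ s) (hE : 0 ≤ E) (hr : r^2 ≤ s*E)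
    (hu0 : 0 ≤ u) (hu1 : u ≤ 1) : 2*(β*(u*r)) ≤ β^2*(u*s) + E := by
  have h1 : 2*β*r ≤ β^2*s + E := amgm hβ hs hE hr
  have h2 : u*(2*β*r) ≤ u*(β^2*s + E) := mul_le_mul_of_nonneg_left h1 hu0
  have h3 : u*E ≤ E := by nlinarith
  nlinarith [h2, h3]

/-- one-direction bound ≤: from `d ≤ e` with `d^2 ≤ M^2`, `0 ≤ M` conclude `d ≤ M`. -/
private lemma sq_le_imp_le {d M : ℝ} (h : d^2 ≤ M^2) (hM : 0 ≤ M) : d ≤ M := by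
  nlinarith

set_option maxHeartbeats 2000000 in
private lemma key_ineq (β ϱ : ℝ) (hβ : 0 < β) (hϱ0 : 0 ≤ ϱ) (hϱ1 : ϱ ≤ 1)
    (G11 G12 G13 G14 G21 G22 G23 G24 G31 G32 G33 G41 G42 G44 K : Matrix (Fin n) (Fin n) ℝ)
    (hs12 : G12ᵀ = G21) (hs13 : G13ᵀ = G31) (hs14 : G14ᵀ = G41)
    (hs23 : G23ᵀ = G32) (hs24 : G24ᵀ = G42)
    (hK : K.PosSemidef)
    (hmono : ∀ x y z θ : Fin n → ℝ,
      -((G11.mulVec x + G12.mulVec y + G13.mulVec z + G14.mulVec θ) ⬝ᵥ x)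
        + (G21.mulVec x + G22.mulVec y + G23.mulVec z + G24.mulVec θ) ⬝ᵥ y
        + (G31.mulVec x + G32.mulVec y + G33.mulVec z) ⬝ᵥ z
        + (G41.mulVec x + G42.mulVec y + G44.mulVec θ) ⬝ᵥ θ
        ≤ -β * (x ⬝ᵥ x + y ⬝ᵥ y + z ⬝ᵥ z + θ ⬝ᵥ θ))
    (x : Fin n → ℝ) :
    β * (x ⬝ᵥ ((K * G21 + G12 * K + G11 + ϱ • (K * G22 * K)
      + (ϱ ^ 2) • ((K * G23 + G13) * ((1 - K * G33)⁻¹ * K) * (G31 + G32 * K))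
      + (ϱ ^ 2) • ((K * G24 + G14) * ((1 - K * G44)⁻¹ * K) * (G41 + G42 * K))) *ᵥ x))
    ≤ ((2*(n:ℝ)*‖G11‖*β + (n:ℝ)^2*‖G31‖^2 + (n:ℝ)^2*‖G41‖^2)
        + 2*(n:ℝ)*‖G12‖*β * Matrix.trace K) * (x ⬝ᵥ x) := by
  -- quadratic-form facts for G22, G33, G44
  have h22 : ∀ y : Fin n → ℝ, (G22 *ᵥ y) ⬝ᵥ y ≤ -β * (y ⬝ᵥ y) := by
    intro y
    have := hmono 0 y 0 0
    simpa using this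
  have h33 : ∀ zz : Fin n → ℝ, (G33 *ᵥ zz) ⬝ᵥ zz ≤ -β * (zz ⬝ᵥ zz) := by
    intro zz
    have := hmono 0 0 zz 0
    simpa using this
  have h44 : ∀ th : Fin n → ℝ, (G44 *ᵥ th) ⬝ᵥ th ≤ -β * (th ⬝ᵥ th) := by
    intro th
    have := hmono 0 0 0 th
    simpa using this
  set Kx : Fin n → ℝ := K *ᵥ x with hKx
  set z : Fin n → ℝ := ((1 - K * G33)⁻¹ * K) *ᵥ ((G31 + G32 * K) *ᵥ x) with hzdef
  set θ : Fin n → ℝ := ((1 - K * G44)⁻¹ * K) *ᵥ ((G41 + G42 * K) *ᵥ x) with hθdef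
  set w : Fin n → ℝ := (G31 + G32 * K) *ᵥ x + G33 *ᵥ z with hwdef
  set v : Fin n → ℝ := (G41 + G42 * K) *ᵥ x + G44 *ᵥ θ with hvdef
  have kdot : ∀ u : Fin n → ℝ, x ⬝ᵥ (K *ᵥ u) = Kx ⬝ᵥ u := by
    intro u; rw [dot_mulVec_left, psd_symm hK]
  -- z = K w
  have hzw : z = K *ᵥ w := by
    have hc := inv_cancel hβ hK h33 (K *ᵥ ((G31 + G32 * K) *ᵥ x))
    have hz2 : z = (1 - K * G33)⁻¹ *ᵥ (K *ᵥ ((G31 + G32 * K) *ᵥ x)) := by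
      rw [hzdef, ← Matrix.mulVec_mulVec]
    rw [← hz2] at hc
    have hc2 : z - K *ᵥ (G33 *ᵥ z) = K *ᵥ ((G31 + G32 * K) *ᵥ x) := by
      rw [← hc, Matrix.sub_mulVec, Matrix.one_mulVec, ← Matrix.mulVec_mulVec]
    rw [hwdef, Matrix.mulVec_add, ← hc2]
    abel
  have hθv : θ = K *ᵥ v := by
    have hc := inv_cancel hβ hK h44 (K *ᵥ ((G41 + G42 * K) *ᵥ x))
    have hz2 : θ = (1 - K * G44)⁻¹ *ᵥ (K *ᵥ ((G41 + G42 * K) *ᵥ x)) := by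
      rw [hθdef, ← Matrix.mulVec_mulVec]
    rw [← hz2] at hc
    have hc2 : θ - K *ᵥ (G44 *ᵥ θ) = K *ᵥ ((G41 + G42 * K) *ᵥ x) := by
      rw [← hc, Matrix.sub_mulVec, Matrix.one_mulVec, ← Matrix.mulVec_mulVec]
    rw [hvdef, Matrix.mulVec_add, ← hc2]
    abel
  -- scalar abbreviations (as plain defs for readability; they are just dot products)
  -- E1 : the Riccati quadratic form in scalar terms
  have e1 : x ⬝ᵥ ((K * G21) *ᵥ x) = (G12 *ᵥ Kx) ⬝ᵥ x := by
    rw [← Matrix.mulVec_mulVec, kdot, htrans hs12 Kx x, dotProduct_comm]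
  have e2 : x ⬝ᵥ ((G12 * K) *ᵥ x) = (G12 *ᵥ Kx) ⬝ᵥ x := by
    rw [← Matrix.mulVec_mulVec, ← hKx, dotProduct_comm]
  have e3 : x ⬝ᵥ (G11 *ᵥ x) = (G11 *ᵥ x) ⬝ᵥ x := dotProduct_comm _ _
  have e4 : x ⬝ᵥ ((K * G22 * K) *ᵥ x) = (G22 *ᵥ Kx) ⬝ᵥ Kx := by
    rw [← Matrix.mulVec_mulVec, ← Matrix.mulVec_mulVec, ← hKx, kdot, dotProduct_comm]
  have e5 : x ⬝ᵥ (((K * G23 + G13) * ((1 - K * G33)⁻¹ * K) * (G31 + G32 * K)) *ᵥ x)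
      = (G32 *ᵥ Kx) ⬝ᵥ z + (G31 *ᵥ x) ⬝ᵥ z := by
    rw [← Matrix.mulVec_mulVec, ← Matrix.mulVec_mulVec, ← hzdef]
    rw [Matrix.add_mulVec, dotProduct_add, ← Matrix.mulVec_mulVec, kdot,
      dotProduct_comm Kx, htrans hs23 z Kx, dotProduct_comm x,
      htrans hs13 z x]
  have e6 : x ⬝ᵥ (((K * G24 + G14) * ((1 - K * G44)⁻¹ * K) * (G41 + G42 * K)) *ᵥ x)
      = (G42 *ᵥ Kx) ⬝ᵥ θ + (G41 *ᵥ x) ⬝ᵥ θ := by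
    rw [← Matrix.mulVec_mulVec, ← Matrix.mulVec_mulVec, ← hθdef]
    rw [Matrix.add_mulVec, dotProduct_add, ← Matrix.mulVec_mulVec, kdot,
      dotProduct_comm Kx, htrans hs24 θ Kx, dotProduct_comm x,
      htrans hs14 θ x]
  have hE1 : x ⬝ᵥ ((K * G21 + G12 * K + G11 + ϱ • (K * G22 * K)
      + (ϱ ^ 2) • ((K * G23 + G13) * ((1 - K * G33)⁻¹ * K) * (G31 + G32 * K))
      + (ϱ ^ 2) • ((K * G24 + G14) * ((1 - K * G44)⁻¹ * K) * (G41 + G42 * K))) *ᵥ x)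
      = 2*((G12 *ᵥ Kx) ⬝ᵥ x) + (G11 *ᵥ x) ⬝ᵥ x + ϱ*((G22 *ᵥ Kx) ⬝ᵥ Kx)
        + ϱ^2*((G32 *ᵥ Kx) ⬝ᵥ z + (G31 *ᵥ x) ⬝ᵥ z)
        + ϱ^2*((G42 *ᵥ Kx) ⬝ᵥ θ + (G41 *ᵥ x) ⬝ᵥ θ) := by
    simp only [Matrix.add_mulVec, Matrix.smul_mulVec, dotProduct_add,
      dotProduct_smul, smul_eq_mul]
    rw [e1, e2, e3, e4, e5, e6]
    ring
  -- monotonicity in scalar terms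
  have hMONO : -((G11 *ᵥ x) ⬝ᵥ x) + ϱ^2 * ((G22 *ᵥ Kx) ⬝ᵥ Kx) + 2*ϱ^2*((G32 *ᵥ Kx) ⬝ᵥ z)
      + ϱ^2 * ((G33 *ᵥ z) ⬝ᵥ z) + 2*ϱ^2*((G42 *ᵥ Kx) ⬝ᵥ θ) + ϱ^2 * ((G44 *ᵥ θ) ⬝ᵥ θ)
      ≤ -β * (x ⬝ᵥ x + ϱ^2 * (Kx ⬝ᵥ Kx) + ϱ^2 * (z ⬝ᵥ z) + ϱ^2 * (θ ⬝ᵥ θ)) := by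
    have h := hmono x (ϱ • Kx) (ϱ • z) (ϱ • θ)
    simp only [Matrix.mulVec_smul, dotProduct_add, add_dotProduct,
      dotProduct_smul, smul_dotProduct, smul_eq_mul] at h
    rw [htrans hs12 Kx x, htrans hs13 z x, htrans hs14 θ x,
        htrans hs23 z Kx, htrans hs24 θ Kx] at h
    ring_nf at h ⊢
    linarith [h]
  -- substitution identities
  have hw' : G32 *ᵥ Kx = w - G31 *ᵥ x - G33 *ᵥ z := by
    rw [hwdef, Matrix.add_mulVec, ← Matrix.mulVec_mulVec, ← hKx]
    abel
  have hv' : G42 *ᵥ Kx = v - G41 *ᵥ x - G44 *ᵥ θ := by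
    rw [hvdef, Matrix.add_mulVec, ← Matrix.mulVec_mulVec, ← hKx]
    abel
  have hsub23 : (G32 *ᵥ Kx) ⬝ᵥ z = w ⬝ᵥ (K *ᵥ w) - (G31 *ᵥ x) ⬝ᵥ z - (G33 *ᵥ z) ⬝ᵥ z := by
    rw [hw', sub_dotProduct, sub_dotProduct]
    congr 1
    congr 1
    exact congrArg (fun u => w ⬝ᵥ u) hzw
  have hsub24 : (G42 *ᵥ Kx) ⬝ᵥ θ = v ⬝ᵥ (K *ᵥ v) - (G41 *ᵥ x) ⬝ᵥ θ - (G44 *ᵥ θ) ⬝ᵥ θ := by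
    rw [hv', sub_dotProduct, sub_dotProduct]
    congr 1
    congr 1
    exact congrArg (fun u => v ⬝ᵥ u) hθv
  -- sign facts
  have hkw : 0 ≤ w ⬝ᵥ (K *ᵥ w) := psd_form' hK w
  have hkv : 0 ≤ v ⬝ᵥ (K *ᵥ v) := psd_form' hK v
  have hq22 : (G22 *ᵥ Kx) ⬝ᵥ Kx ≤ 0 := by
    have := h22 Kx
    nlinarith [dot_self_nonneg Kx]
  have hϱsq : ϱ^2 ≤ ϱ := by nlinarith
  have hϱq : ϱ*((G22 *ᵥ Kx) ⬝ᵥ Kx) ≤ ϱ^2*((G22 *ᵥ Kx) ⬝ᵥ Kx) :=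
    mul_le_mul_of_nonpos_right hϱsq hq22
  have hkw' : 0 ≤ ϱ^2*(w ⬝ᵥ (K *ᵥ w)) := mul_nonneg (sq_nonneg ϱ) hkw
  have hkv' : 0 ≤ ϱ^2*(v ⬝ᵥ (K *ᵥ v)) := mul_nonneg (sq_nonneg ϱ) hkv
  have hkxkx : 0 ≤ ϱ^2*(Kx ⬝ᵥ Kx) := mul_nonneg (sq_nonneg ϱ) (dot_self_nonneg Kx)
  have hxx : 0 ≤ x ⬝ᵥ x := dot_self_nonneg x
  -- cross-term bounds
  have hr31 : 2*(β*(ϱ^2*((G31 *ᵥ x) ⬝ᵥ z))) ≤ β^2*(ϱ^2*(z ⬝ᵥ z)) + (n:ℝ)^2*‖G31‖^2*(x ⬝ᵥ x) := by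
    apply amgm2 hβ (dot_self_nonneg z) (by positivity)
    · calc ((G31 *ᵥ x) ⬝ᵥ z)^2 ≤ ((G31 *ᵥ x) ⬝ᵥ (G31 *ᵥ x)) * (z ⬝ᵥ z) := dot_cs _ _
        _ ≤ ((n:ℝ)^2*‖G31‖^2*(x ⬝ᵥ x)) * (z ⬝ᵥ z) :=
            mul_le_mul_of_nonneg_right (mulVec_sq_le G31 x) (dot_self_nonneg z)
        _ = (z ⬝ᵥ z) * ((n:ℝ)^2*‖G31‖^2*(x ⬝ᵥ x)) := by ring
    · exact sq_nonneg ϱ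
    · nlinarith
  have hr41 : 2*(β*(ϱ^2*((G41 *ᵥ x) ⬝ᵥ θ))) ≤ β^2*(ϱ^2*(θ ⬝ᵥ θ)) + (n:ℝ)^2*‖G41‖^2*(x ⬝ᵥ x) := by
    apply amgm2 hβ (dot_self_nonneg θ) (by positivity)
    · calc ((G41 *ᵥ x) ⬝ᵥ θ)^2 ≤ ((G41 *ᵥ x) ⬝ᵥ (G41 *ᵥ x)) * (θ ⬝ᵥ θ) := dot_cs _ _
        _ ≤ ((n:ℝ)^2*‖G41‖^2*(x ⬝ᵥ x)) * (θ ⬝ᵥ θ) :=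
            mul_le_mul_of_nonneg_right (mulVec_sq_le G41 x) (dot_self_nonneg θ)
        _ = (θ ⬝ᵥ θ) * ((n:ℝ)^2*‖G41‖^2*(x ⬝ᵥ x)) := by ring
    · exact sq_nonneg ϱ
    · nlinarith
  have hp12 : (G12 *ᵥ Kx) ⬝ᵥ x ≤ (n:ℝ)*‖G12‖ * Matrix.trace K * (x ⬝ᵥ x) := by
    have htrn := psd_trace_nonneg hK
    apply sq_le_imp_le _ (by positivity)
    calc ((G12 *ᵥ Kx) ⬝ᵥ x)^2 ≤ ((G12 *ᵥ Kx) ⬝ᵥ (G12 *ᵥ Kx)) * (x ⬝ᵥ x) := dot_cs _ _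
      _ ≤ ((n:ℝ)^2*‖G12‖^2*(Kx ⬝ᵥ Kx)) * (x ⬝ᵥ x) :=
          mul_le_mul_of_nonneg_right (mulVec_sq_le G12 Kx) hxx
      _ ≤ ((n:ℝ)^2*‖G12‖^2*((Matrix.trace K)^2 * (x ⬝ᵥ x))) * (x ⬝ᵥ x) := by
          have hKb := psd_mulVec_sq_le hK x
          rw [← hKx] at hKb
          have h0 : (0:ℝ) ≤ (n:ℝ)^2*‖G12‖^2 := by positivity
          nlinarith [hxx, mul_nonneg h0 hxx, hKb]
      _ = ((n:ℝ)*‖G12‖ * Matrix.trace K * (x ⬝ᵥ x))^2 := by ring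
  have ha11 : (G11 *ᵥ x) ⬝ᵥ x ≤ (n:ℝ)*‖G11‖ * (x ⬝ᵥ x) := by
    apply sq_le_imp_le _ (by positivity)
    calc ((G11 *ᵥ x) ⬝ᵥ x)^2 ≤ ((G11 *ᵥ x) ⬝ᵥ (G11 *ᵥ x)) * (x ⬝ᵥ x) := dot_cs _ _
      _ ≤ ((n:ℝ)^2*‖G11‖^2*(x ⬝ᵥ x)) * (x ⬝ᵥ x) :=
          mul_le_mul_of_nonneg_right (mulVec_sq_le G11 x) hxx
      _ = ((n:ℝ)*‖G11‖ * (x ⬝ᵥ x))^2 := by ring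
  -- assemble
  rw [hE1]
  have hMONOβ := mul_le_mul_of_nonneg_left hMONO hβ.le
  have hϱqβ := mul_le_mul_of_nonneg_left hϱq hβ.le
  have hp12β := mul_le_mul_of_nonneg_left hp12 hβ.le
  have ha11β := mul_le_mul_of_nonneg_left ha11 hβ.le
  have hsub23' : ϱ^2*((G32 *ᵥ Kx) ⬝ᵥ z)
      = ϱ^2*(w ⬝ᵥ (K *ᵥ w)) - ϱ^2*((G31 *ᵥ x) ⬝ᵥ z) - ϱ^2*((G33 *ᵥ z) ⬝ᵥ z) := by
    rw [hsub23]; ring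
  have hsub24' : ϱ^2*((G42 *ᵥ Kx) ⬝ᵥ θ)
      = ϱ^2*(v ⬝ᵥ (K *ᵥ v)) - ϱ^2*((G41 *ᵥ x) ⬝ᵥ θ) - ϱ^2*((G44 *ᵥ θ) ⬝ᵥ θ) := by
    rw [hsub24]; ring
  have hsub23β : β*(ϱ^2*((G32 *ᵥ Kx) ⬝ᵥ z))
      = β*(ϱ^2*(w ⬝ᵥ (K *ᵥ w))) - β*(ϱ^2*((G31 *ᵥ x) ⬝ᵥ z)) - β*(ϱ^2*((G33 *ᵥ z) ⬝ᵥ z)) := by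
    rw [hsub23]; ring
  have hsub24β : β*(ϱ^2*((G42 *ᵥ Kx) ⬝ᵥ θ))
      = β*(ϱ^2*(v ⬝ᵥ (K *ᵥ v))) - β*(ϱ^2*((G41 *ᵥ x) ⬝ᵥ θ)) - β*(ϱ^2*((G44 *ᵥ θ) ⬝ᵥ θ)) := by
    rw [hsub24]; ring
  linarith [hMONOβ, hsub23β, hsub24β, hϱqβ, hp12β, ha11β,
    mul_nonneg hβ.le hkw', mul_nonneg hβ.le hkv',
    mul_nonneg (mul_nonneg hβ.le hβ.le) hkxkx, mul_nonneg (mul_nonneg hβ.le hβ.le) hxx,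
    mul_nonneg hβ.le hxx]

private lemma gronwall_aux (c d T s : ℝ) (hc : 0 ≤ c) (hd : 0 < d) (hs : s ≤ T)
    (ψ G : ℝ → ℝ) (hcont : ContinuousOn ψ (Icc s T))
    (hder : ∀ t ∈ Ico s T, HasDerivAt ψ (G t) t)
    (hG : ∀ t ∈ Ico s T, -(c + d * ψ t) ≤ G t)
    (hT : ψ T = 0) : ψ s ≤ c/d * (Real.exp (d*(T-s)) - 1) := by
  set g : ℝ → ℝ := fun t => c/d * (Real.exp (d*(T-t)) - 1) with hg
  set φ : ℝ → ℝ := fun t => (ψ t - g t) * Real.exp (d*t) with hφ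
  have hgder : ∀ t : ℝ, HasDerivAt g (-(c * Real.exp (d*(T-t)))) t := by
    intro t
    have h1 : HasDerivAt (fun u : ℝ => d*(T-u)) (-d) t := by
      simpa using ((hasDerivAt_id t).const_sub T).const_mul d
    have h2 : HasDerivAt (fun u : ℝ => Real.exp (d*(T-u))) (Real.exp (d*(T-t)) * (-d)) t :=
      h1.exp
    have h3 := (h2.sub_const 1).const_mul (c/d)
    refine h3.congr_deriv ?_
    rw [div_mul_eq_mul_div, div_eq_iff hd.ne']
    ring
  have heder : ∀ t : ℝ, HasDerivAt (fun u : ℝ => Real.exp (d*u)) (d * Real.exp (d*t)) t := by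
    intro t
    have h1 : HasDerivAt (fun u : ℝ => d*u) d t := by
      simpa using (hasDerivAt_id t).const_mul d
    simpa [mul_comm] using h1.exp
  have hφder : ∀ t ∈ Ico s T, HasDerivAt φ
      ((G t - (-(c * Real.exp (d*(T-t))))) * Real.exp (d*t)
        + (ψ t - g t) * (d * Real.exp (d*t))) t := by
    intro t ht
    exact ((hder t ht).sub (hgder t)).mul (heder t)
  have hφcont : ContinuousOn φ (Icc s T) := by
    apply ContinuousOn.mul
    · apply ContinuousOn.sub hcont
      apply Continuous.continuousOn
      continuity
    · apply Continuous.continuousOn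
      continuity
  have hφmono : MonotoneOn φ (Icc s T) := by
    apply monotoneOn_of_deriv_nonneg (convex_Icc s T) hφcont
    · intro t ht
      rw [interior_Icc] at ht
      exact ((hφder t ⟨ht.1.le, ht.2⟩).differentiableAt).differentiableWithinAt
    · intro t ht
      rw [interior_Icc] at ht
      have ht' : t ∈ Ico s T := ⟨ht.1.le, ht.2⟩
      rw [(hφder t ht').deriv]
      have h1 := hG t ht'
      have h2 : (0:ℝ) < Real.exp (d*t) := Real.exp_pos _
      have hgt : g t = c/d * (Real.exp (d*(T-t)) - 1) := rfl
      have key : G t - (-(c * Real.exp (d*(T-t)))) + (ψ t - g t) * d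
          = G t + (c + d * ψ t) := by
        rw [hgt]
        field_simp
        ring
      have h3 : 0 ≤ G t + (c + d * ψ t) := by linarith
      nlinarith [h2, h3, key]
  have hφs : φ s ≤ φ T :=
    hφmono (by constructor <;> [exact le_refl s; exact hs] : s ∈ Icc s T)
      (⟨hs, le_refl T⟩ : T ∈ Icc s T) hs
  have hφT : φ T = 0 := by
    simp only [hφ, hg, hT]
    simp
  rw [hφT] at hφs
  have h2 : (0:ℝ) < Real.exp (d*s) := Real.exp_pos _
  have hmul : (ψ s - g s) * Real.exp (d*s) ≤ 0 := hφs
  have h4 : ψ s - g s ≤ 0 := by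
    by_contra h
    push_neg at h
    nlinarith
  have hgs : g s = c/d * (Real.exp (d*(T-s)) - 1) := rfl
  linarith [h4, hgs.le, hgs.ge]

private noncomputable def traceCLM (n : ℕ) : Matrix (Fin n) (Fin n) ℝ →L[ℝ] ℝ :=
  LinearMap.toContinuousLinearMap (Matrix.traceLinearMap (Fin n) ℝ ℝ)

private lemma traceCLM_apply (A : Matrix (Fin n) (Fin n) ℝ) : traceCLM n A = Matrix.trace A := rfl

private lemma hasDerivAt_trace {K : ℝ → Matrix (Fin n) (Fin n) ℝ} {M : Matrix (Fin n) (Fin n) ℝ}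
    {t : ℝ} (h : HasDerivAt K M t) :
    HasDerivAt (fun u => Matrix.trace (K u)) (Matrix.trace M) t := by
  have := (traceCLM n).hasFDerivAt.comp_hasDerivAt t h
  exact this

private lemma continuousOn_trace {K : ℝ → Matrix (Fin n) (Fin n) ℝ} {s : Set ℝ}
    (h : ContinuousOn K s) : ContinuousOn (fun u => Matrix.trace (K u)) s :=
  (traceCLM n).continuous.comp_continuousOn h

-- bounded-coefficient helper
private lemma bdd_of_const (T : ℝ) (hT : 0 < T) (f : ℝ → Matrix (Fin n) (Fin n) ℝ)
    (hf : Continuous f) (hconst : ∀ t ≤ (0:ℝ), f t = f 0) :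
    ∃ M : ℝ, 0 ≤ M ∧ ∀ t ≤ T, ‖f t‖ ≤ M := by
  obtain ⟨C, hC⟩ := (isCompact_Icc (a := (0:ℝ)) (b := T)).exists_bound_of_continuousOn
    hf.continuousOn
  refine ⟨max C 0, le_max_right _ _, ?_⟩
  intro t ht
  rcases le_or_gt t 0 with h | h
  · rw [hconst t h]
    exact le_trans (hC 0 ⟨le_refl 0, hT.le⟩) (le_max_left _ _)
  · exact le_trans (hC t ⟨h.le, ht⟩) (le_max_left _ _)

/-- Right-hand side of the matrix Riccati equation `−K̇ = Ric ϱ t K`. -/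
noncomputable def Ric {n : ℕ}
    (H11 H12 H13 H14 H21 H22 H23 H24 H31 H32 H33 H41 H42 H44 :
      ℝ → Matrix (Fin n) (Fin n) ℝ) (ϱ t : ℝ)
    (K : Matrix (Fin n) (Fin n) ℝ) : Matrix (Fin n) (Fin n) ℝ :=
  K * H21 t + H12 t * K + H11 t + ϱ • (K * H22 t * K)
    + (ϱ ^ 2) • ((K * H23 t + H13 t) * ((1 - K * H33 t)⁻¹ * K) * (H31 t + H32 t * K))
    + (ϱ ^ 2) • ((K * H24 t + H14 t) * ((1 - K * H44 t)⁻¹ * K) * (H41 t + H42 t * K))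

set_option maxHeartbeats 2000000 in
/-- for `ϱ ∈ [0,1]` the Riccati equation has no blow-up
(`t_ϱ = −∞`) and the solution is uniformly bounded: `0 ≤ K_t(ϱ) ≤ C Iₙ` on `[0,T]`. -/
theorem stmt_6
    (T : ℝ) (hT : 0 < T) (n : ℕ) (hn : 1 ≤ n) (β : ℝ) (hβ : 0 < β)
    (H11 H12 H13 H14 H21 H22 H23 H24 H31 H32 H33 H41 H42 H44 :
      ℝ → Matrix (Fin n) (Fin n) ℝ)
    (hc11 : Continuous H11) (hc12 : Continuous H12) (hc13 : Continuous H13)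
    (hc14 : Continuous H14) (hc21 : Continuous H21) (hc22 : Continuous H22)
    (hc23 : Continuous H23) (hc24 : Continuous H24) (hc31 : Continuous H31)
    (hc32 : Continuous H32) (hc33 : Continuous H33) (hc41 : Continuous H41)
    (hc42 : Continuous H42) (hc44 : Continuous H44)
    (hsym : ∀ t : ℝ, (H11 t)ᵀ = H11 t ∧ (H12 t)ᵀ = H21 t ∧ (H13 t)ᵀ = H31 t ∧
      (H14 t)ᵀ = H41 t ∧ (H22 t)ᵀ = H22 t ∧ (H23 t)ᵀ = H32 t ∧
      (H24 t)ᵀ = H42 t ∧ (H33 t)ᵀ = H33 t ∧ (H44 t)ᵀ = H44 t)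
    (hconst : ∀ t : ℝ, t ≤ 0 → H11 t = H11 0 ∧ H12 t = H12 0 ∧ H13 t = H13 0 ∧
      H14 t = H14 0 ∧ H21 t = H21 0 ∧ H22 t = H22 0 ∧ H23 t = H23 0 ∧
      H24 t = H24 0 ∧ H31 t = H31 0 ∧ H32 t = H32 0 ∧ H33 t = H33 0 ∧
      H41 t = H41 0 ∧ H42 t = H42 0 ∧ H44 t = H44 0)
    (hmono : ∀ t : ℝ, t ≤ T → ∀ x y z θ : Fin n → ℝ,
      -(((H11 t).mulVec x + (H12 t).mulVec y + (H13 t).mulVec z + (H14 t).mulVec θ) ⬝ᵥ x)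
        + ((H21 t).mulVec x + (H22 t).mulVec y + (H23 t).mulVec z + (H24 t).mulVec θ) ⬝ᵥ y
        + ((H31 t).mulVec x + (H32 t).mulVec y + (H33 t).mulVec z) ⬝ᵥ z
        + ((H41 t).mulVec x + (H42 t).mulVec y + (H44 t).mulVec θ) ⬝ᵥ θ
        ≤ -β * (x ⬝ᵥ x + y ⬝ᵥ y + z ⬝ᵥ z + θ ⬝ᵥ θ))
    (K : ℝ → ℝ → Matrix (Fin n) (Fin n) ℝ) (tb : ℝ → EReal)
    (htbT : ∀ ϱ : ℝ, tb ϱ < (T : EReal))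
    (hterm : ∀ ϱ : ℝ, K ϱ T = 0)
    (hcont : ∀ ϱ : ℝ, ContinuousOn (K ϱ) {t : ℝ | tb ϱ < (t : EReal) ∧ t ≤ T})
    (hode : ∀ ϱ t : ℝ, tb ϱ < (t : EReal) → t < T →
      HasDerivAt (K ϱ)
        (-(Ric H11 H12 H13 H14 H21 H22 H23 H24 H31 H32 H33 H41 H42 H44 ϱ t (K ϱ t))) t)
    (hpsd : ∀ ϱ t : ℝ, tb ϱ < (t : EReal) → t ≤ T → (K ϱ t).PosSemidef)
    (hblow : ∀ ϱ : ℝ, ⊥ < tb ϱ →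
      Tendsto (fun t => ‖K ϱ t‖) (nhdsWithin (tb ϱ).toReal (Set.Ioi (tb ϱ).toReal)) atTop) :
    (∀ ϱ ∈ Set.Icc (0 : ℝ) 1, tb ϱ = ⊥) ∧
    ∃ C > (0 : ℝ), ∀ ϱ ∈ Set.Icc (0 : ℝ) 1, ∀ t ∈ Set.Icc (0 : ℝ) T,
      (K ϱ t).PosSemidef ∧ (C • (1 : Matrix (Fin n) (Fin n) ℝ) - K ϱ t).PosSemidef := by
  classical
  have hn' : (0:ℝ) < (n:ℝ) := by exact_mod_cast Nat.pos_of_ne_zero (by omega)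
  -- uniform coefficient bounds on (-∞, T]
  obtain ⟨M11, hM11n, hM11⟩ := bdd_of_const T hT H11 hc11 (fun t ht => (hconst t ht).1)
  obtain ⟨M12, hM12n, hM12⟩ := bdd_of_const T hT H12 hc12 (fun t ht => (hconst t ht).2.1)
  obtain ⟨M31, hM31n, hM31⟩ := bdd_of_const T hT H31 hc31
    (fun t ht => (hconst t ht).2.2.2.2.2.2.2.2.1)
  obtain ⟨M41, hM41n, hM41⟩ := bdd_of_const T hT H41 hc41
    (fun t ht => (hconst t ht).2.2.2.2.2.2.2.2.2.2.2.1)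
  set a : ℝ := 2*(n:ℝ)*M11*β + (n:ℝ)^2*M31^2 + (n:ℝ)^2*M41^2 + 1 with ha_def
  set b : ℝ := 2*(n:ℝ)*M12*β + 1 with hb_def
  have ha : 0 < a := by positivity
  have hb : 0 < b := by positivity
  set c : ℝ := (n:ℝ)*a/β with hc_def
  set d : ℝ := (n:ℝ)*b/β with hd_def
  have hc : 0 ≤ c := by positivity
  have hd : 0 < d := by positivity
  -- pointwise trace bound for the Riccati right-hand side
  have hkey : ∀ ϱ ∈ Set.Icc (0:ℝ) 1, ∀ t : ℝ, t ≤ T →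
      ∀ K' : Matrix (Fin n) (Fin n) ℝ, K'.PosSemidef →
      Matrix.trace (Ric H11 H12 H13 H14 H21 H22 H23 H24 H31 H32 H33 H41 H42 H44 ϱ t K')
        ≤ c + d * Matrix.trace K' := by
    intro ϱ hϱ t htT K' hK'
    have hdiag : ∀ i : Fin n,
        β * ((Ric H11 H12 H13 H14 H21 H22 H23 H24 H31 H32 H33 H41 H42 H44 ϱ t K') i i)
          ≤ a + b * Matrix.trace K' := by
      intro i
      have hx1 : (Pi.single i 1 : Fin n → ℝ) ⬝ᵥ (Pi.single i 1 : Fin n → ℝ) = 1 := by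
        simp [dotProduct_single]
      have hk := key_ineq β ϱ hβ hϱ.1 hϱ.2 (H11 t) (H12 t) (H13 t) (H14 t) (H21 t) (H22 t)
        (H23 t) (H24 t) (H31 t) (H32 t) (H33 t) (H41 t) (H42 t) (H44 t) K'
        (hsym t).2.1 (hsym t).2.2.1 (hsym t).2.2.2.1 (hsym t).2.2.2.2.2.1
        (hsym t).2.2.2.2.2.2.1 hK' (hmono t htT) (Pi.single i 1)
      rw [hx1, mul_one] at hk
      have he : (Ric H11 H12 H13 H14 H21 H22 H23 H24 H31 H32 H33 H41 H42 H44 ϱ t K') i i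
          = (Pi.single i 1 : Fin n → ℝ) ⬝ᵥ
            ((Ric H11 H12 H13 H14 H21 H22 H23 H24 H31 H32 H33 H41 H42 H44 ϱ t K') *ᵥ
              Pi.single i 1) := entry_form _ i i
      rw [he]
      have hτ := psd_trace_nonneg hK'
      have b11 := hM11 t htT
      have b12 := hM12 t htT
      have b31 := hM31 t htT
      have b41 := hM41 t htT
      have hnorm11 : 0 ≤ ‖H11 t‖ := norm_nonneg _
      have hnorm12 : 0 ≤ ‖H12 t‖ := norm_nonneg _
      have hnorm31 : 0 ≤ ‖H31 t‖ := norm_nonneg _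
      have hnorm41 : 0 ≤ ‖H41 t‖ := norm_nonneg _
      have hRic : Ric H11 H12 H13 H14 H21 H22 H23 H24 H31 H32 H33 H41 H42 H44 ϱ t K'
          = K' * H21 t + H12 t * K' + H11 t + ϱ • (K' * H22 t * K')
            + (ϱ ^ 2) • ((K' * H23 t + H13 t) * ((1 - K' * H33 t)⁻¹ * K') * (H31 t + H32 t * K'))
            + (ϱ ^ 2) • ((K' * H24 t + H14 t) * ((1 - K' * H44 t)⁻¹ * K') * (H41 t + H42 t * K'))
          := rfl
      rw [hRic]
      nlinarith [hk, mul_le_mul_of_nonneg_left b11 (by positivity : (0:ℝ) ≤ 2*(n:ℝ)*β),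
        mul_le_mul_of_nonneg_left (mul_le_mul b31 b31 hnorm31 hM31n)
          (by positivity : (0:ℝ) ≤ (n:ℝ)^2),
        mul_le_mul_of_nonneg_left (mul_le_mul b41 b41 hnorm41 hM41n)
          (by positivity : (0:ℝ) ≤ (n:ℝ)^2),
        mul_le_mul_of_nonneg_left (mul_le_mul_of_nonneg_right b12 hτ)
          (by positivity : (0:ℝ) ≤ 2*(n:ℝ)*β)]
    -- sum over the diagonal
    have hsum : β * Matrix.trace
        (Ric H11 H12 H13 H14 H21 H22 H23 H24 H31 H32 H33 H41 H42 H44 ϱ t K')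
        ≤ (n:ℝ) * (a + b * Matrix.trace K') := by
      have htr : Matrix.trace (Ric H11 H12 H13 H14 H21 H22 H23 H24 H31 H32 H33 H41 H42 H44 ϱ t K')
          = ∑ i, (Ric H11 H12 H13 H14 H21 H22 H23 H24 H31 H32 H33 H41 H42 H44 ϱ t K') i i := by
        simp [Matrix.trace, Matrix.diag]
      rw [htr, Finset.mul_sum]
      calc (∑ i, β * (Ric H11 H12 H13 H14 H21 H22 H23 H24 H31 H32 H33 H41 H42 H44 ϱ t K') i i)
          ≤ ∑ _i : Fin n, (a + b * Matrix.trace K') := Finset.sum_le_sum fun i _ => hdiag i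
        _ = (n:ℝ) * (a + b * Matrix.trace K') := by simp [Finset.sum_const]; ring
    have hβ' : β ≠ 0 := ne_of_gt hβ
    rw [hc_def, hd_def]
    set RT : ℝ := Matrix.trace (Ric H11 H12 H13 H14 H21 H22 H23 H24 H31 H32 H33 H41 H42 H44 ϱ t K') with hRT
    set τ : ℝ := Matrix.trace K' with hτ'
    have hfin : RT ≤ ((n:ℝ)*a + (n:ℝ)*b*τ)/β := by
      rw [le_div_iff₀ hβ]
      linarith [hsum]
    calc RT ≤ ((n:ℝ)*a + (n:ℝ)*b*τ)/β := hfin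
      _ = (n:ℝ)*a/β + (n:ℝ)*b/β * τ := by ring
  -- Gronwall bound for the trace along the solution
  have hGron : ∀ ϱ ∈ Set.Icc (0:ℝ) 1, ∀ s : ℝ, tb ϱ < (s : EReal) → s ≤ T →
      Matrix.trace (K ϱ s) ≤ c/d * (Real.exp (d*(T-s)) - 1) := by
    intro ϱ hϱ s hs hsT
    have hsub : Set.Icc s T ⊆ {t : ℝ | tb ϱ < (t : EReal) ∧ t ≤ T} := by
      intro u hu
      exact ⟨lt_of_lt_of_le hs (by exact_mod_cast EReal.coe_le_coe_iff.mpr hu.1), hu.2⟩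
    apply gronwall_aux c d T s hc hd hsT _
      (fun u => -(Matrix.trace
        (Ric H11 H12 H13 H14 H21 H22 H23 H24 H31 H32 H33 H41 H42 H44 ϱ u (K ϱ u))))
    · exact continuousOn_trace ((hcont ϱ).mono hsub)
    · intro t ht
      have htb : tb ϱ < (t : EReal) :=
        lt_of_lt_of_le hs (by exact_mod_cast EReal.coe_le_coe_iff.mpr ht.1)
      have h := hasDerivAt_trace (hode ϱ t htb ht.2)
      simpa [Matrix.trace_neg] using h
    · intro t ht
      have htb : tb ϱ < (t : EReal) :=
        lt_of_lt_of_le hs (by exact_mod_cast EReal.coe_le_coe_iff.mpr ht.1)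
      have hb1 := hkey ϱ hϱ t ht.2.le (K ϱ t) (hpsd ϱ t htb ht.2.le)
      linarith
    · rw [hterm ϱ]
      simp
  -- Part 1: no blow-up
  have hbot : ∀ ϱ ∈ Set.Icc (0:ℝ) 1, tb ϱ = ⊥ := by
    intro ϱ hϱ
    by_contra hne
    have hblt : ⊥ < tb ϱ := bot_lt_iff_ne_bot.mpr hne
    have hnet : tb ϱ ≠ ⊤ := ne_top_of_lt (lt_trans (htbT ϱ) (EReal.coe_lt_top T))
    set r : ℝ := (tb ϱ).toReal with hr_def
    have htb_eq : tb ϱ = (r : EReal) := (EReal.coe_toReal hnet hne).symm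
    have hrT : r < T := by
      have h := htbT ϱ
      rw [htb_eq] at h
      exact_mod_cast h
    set B : ℝ := c/d * Real.exp (d*(T-r)) with hB_def
    have hev1 : ∀ᶠ t in nhdsWithin r (Set.Ioi r), B < ‖K ϱ t‖ := by
      have h := hblow ϱ hblt
      rw [← hr_def] at h
      exact h.eventually (Filter.eventually_gt_atTop B)
    have hev2 : ∀ᶠ t in nhdsWithin r (Set.Ioi r), t < T :=
      Filter.Eventually.filter_mono nhdsWithin_le_nhds
        (eventually_nhds_iff.mpr ⟨Set.Iio T, fun y hy => hy, isOpen_Iio, hrT⟩)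
    have hev3 : ∀ᶠ t in nhdsWithin r (Set.Ioi r), r < t := self_mem_nhdsWithin
    obtain ⟨t, ht1, ht3⟩ := ((hev1.and hev2).and hev3).exists
    obtain ⟨htB, htT'⟩ := ht1
    have htb2 : tb ϱ < (t : EReal) := by
      rw [htb_eq]
      exact_mod_cast ht3
    have hbound := hGron ϱ hϱ t htb2 htT'.le
    have hnorm := psd_norm_le_trace (hpsd ϱ t htb2 htT'.le)
    have hexp : Real.exp (d*(T-t)) ≤ Real.exp (d*(T-r)) := by
      apply Real.exp_le_exp.mpr
      nlinarith
    have hcd : 0 ≤ c/d := by positivity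
    have hfin : Matrix.trace (K ϱ t) ≤ B := by
      rw [hB_def]
      calc Matrix.trace (K ϱ t) ≤ c/d * (Real.exp (d*(T-t)) - 1) := hbound
        _ ≤ c/d * Real.exp (d*(T-t)) := by nlinarith
        _ ≤ c/d * Real.exp (d*(T-r)) := mul_le_mul_of_nonneg_left hexp hcd
    linarith
  refine ⟨hbot, c/d * Real.exp (d*T) + 1, by positivity, ?_⟩
  intro ϱ hϱ t ht
  have htb2 : tb ϱ < (t : EReal) := by
    rw [hbot ϱ hϱ]
    exact EReal.bot_lt_coe t
  have hpsdK := hpsd ϱ t htb2 ht.2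
  refine ⟨hpsdK, ?_⟩
  have hbound := hGron ϱ hϱ t htb2 ht.2
  have hexp : Real.exp (d*(T-t)) ≤ Real.exp (d*T) := by
    apply Real.exp_le_exp.mpr
    nlinarith [ht.1]
  have hcd : 0 ≤ c/d := by positivity
  have hτC : Matrix.trace (K ϱ t) ≤ c/d * Real.exp (d*T) := by
    calc Matrix.trace (K ϱ t) ≤ c/d * (Real.exp (d*(T-t)) - 1) := hbound
      _ ≤ c/d * Real.exp (d*(T-t)) := by nlinarith
      _ ≤ c/d * Real.exp (d*T) := mul_le_mul_of_nonneg_left hexp hcd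
  set C : ℝ := c/d * Real.exp (d*T) + 1 with hC_def
  refine Matrix.PosSemidef.of_dotProduct_mulVec_nonneg ?_ ?_
  · show (C • (1 : Matrix (Fin n) (Fin n) ℝ) - K ϱ t).IsHermitian
    have h1 : (C • (1 : Matrix (Fin n) (Fin n) ℝ) - K ϱ t)ᴴ
        = C • (1 : Matrix (Fin n) (Fin n) ℝ)ᴴ - (K ϱ t)ᴴ := by
      rw [Matrix.conjTranspose_sub, Matrix.conjTranspose_smul]
      simp
    rw [Matrix.IsHermitian, h1, Matrix.conjTranspose_one, hpsdK.1]
  · intro x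
    have h2 : (C • (1 : Matrix (Fin n) (Fin n) ℝ) - K ϱ t) *ᵥ x = C • x - (K ϱ t) *ᵥ x := by
      rw [Matrix.sub_mulVec, Matrix.smul_mulVec, Matrix.one_mulVec]
    rw [h2]
    have h3 : (star x : Fin n → ℝ) = x := by simp
    rw [h3]
    rw [dotProduct_sub, dotProduct_smul]
    have h4 := psd_form_le_trace hpsdK x
    have h5 := dot_self_nonneg x
    have h6 : x ⬝ᵥ (K ϱ t *ᵥ x) ≤ C * (x ⬝ᵥ x) := by
      have hCτ : Matrix.trace (K ϱ t) ≤ C := by rw [hC_def]; linarith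
      nlinarith
    simpa [smul_eq_mul] using sub_nonneg.mpr h6
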